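/- Let d ≥ 2, R ∈ ℕ with ∂̃D_R nonempty, c ∈ [1,∞), p ∈ (1,∞] (convention 1/∞ = 0, so 2p/(p−1) = 2 and 2p/(p+1) = 2 when p = ∞), and assume |∂D_R| ≤ c |∂̃D_R|. Let S, Z : ℝ^{∂D_R} → ℝ^{∂D_R} be linear operators such that Zu = 0 whenever u vanishes on ∂̃D_R, and such that for all u : ∂D_R → ℝ: ⦀Su⦀_{2p/(p−1), ∂D_R} ≤ c ⦀u⦀_{2p/(p−1), ∂D_R} and ⦀Zu⦀_{2p/(p−1), ∂D_R} ≤ c ⦀u⦀_{2p/(p−1), ∂̃D_R}. Define S^* : ℝ^{∂̃D_R} → ℝ^{∂̃D_R} by (S^*h)(x) = Σ_{y∈∂̃D_R} h(y) (S Z 1_{{x}})(y). Then for all h : ∂̃D_R → ℝ: ⦀S^*h⦀_{2p/(p+1), ∂̃D_R} ≤ c³ ⦀h⦀_{2p/(p+1), ∂̃D_R}. -/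

import Mathlib

open MeasureTheory Filter
open scoped ENNReal Classical

noncomputable section

/-- Points of the lattice `ℤ^d`. -/
abbrev Zd (d : ℕ) := Fin d → ℤ

/-- The `i`-th standard unit vector of `ℤ^d`. -/
def unitVec {d : ℕ} (i : Fin d) : Zd d := fun j => if j = i then 1 else 0

/-- Environments: a positive conductance for every (unoriented nearest-neighbour) edge,
where the edge `{x, x + e i}` is encoded by the pair `(x, i)`. -/
abbrev Env (d : ℕ) := ((Fin d → ℤ) × Fin d) → {r : ℝ // 0 < r}

/-- The conductance of the edge `{x, x + e i}` in the environment `ω`, as a real number. -/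
def cval {d : ℕ} (ω : Env d) (x : Zd d) (i : Fin d) : ℝ := (ω (x, i)).1

/-- Nearest-neighbour adjacency on `ℤ^d`. -/
def Adj {d : ℕ} (x y : Zd d) : Prop :=
  ∃ i : Fin d, y = x + unitVec i ∨ x = y + unitVec i

/-- The conductance `ω_{xy}` between two nearest neighbours `x ∼ y` (and `0` otherwise). -/
def econd {d : ℕ} (ω : Env d) (x y : Zd d) : ℝ :=
  ∑ i : Fin d, ((if y = x + unitVec i then cval ω x i else 0)
    + (if x = y + unitVec i then cval ω y i else 0))

/-- Discrete gradient `(∇_i u)(x) = u(x+e_i) - u(x)`. -/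
def dGrad {d : ℕ} (i : Fin d) (f : Zd d → ℝ) (x : Zd d) : ℝ :=
  f (x + unitVec i) - f x

/-- Discrete backward gradient `(∇_i^* u)(x) = u(x-e_i) - u(x)`. -/
def dGradStar {d : ℕ} (i : Fin d) (f : Zd d → ℝ) (x : Zd d) : ℝ :=
  f (x - unitVec i) - f x

/-- Discrete divergence `(∇^* ⬝ F)(x) = ∑ i, (F_i(x-e_i) - F_i(x))`. -/
def divStar {d : ℕ} (F : Zd d → Fin d → ℝ) (x : Zd d) : ℝ :=
  ∑ i : Fin d, (F (x - unitVec i) i - F x i)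

/-- Discrete Laplacian `Δu = -∑ i, ∇_i^* ∇_i u`. -/
def lap {d : ℕ} (f : Zd d → ℝ) (x : Zd d) : ℝ :=
  - ∑ i : Fin d, dGradStar i (dGrad i f) x

/-- The open discrete box `D_R = {x : |x|_∞ < R}`. -/
def boxD (d R : ℕ) : Finset (Zd d) :=
  Fintype.piFinset fun _ => Finset.Ioo (-(R : ℤ)) (R : ℤ)

/-- The closed discrete box `D̄_R = {x : |x|_∞ ≤ R}`. -/
def boxC (d R : ℕ) : Finset (Zd d) :=
  Fintype.piFinset fun _ => Finset.Icc (-(R : ℤ)) (R : ℤ)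

/-- The discrete boundary `∂D_R = {x : |x|_∞ = R}`. -/
def bdry (d R : ℕ) : Finset (Zd d) := boxC d R \ boxD d R

/-- The reduced boundary `∂̃D_R` of points of `∂D_R` having a neighbour in `D_R`. -/
def tbdry (d R : ℕ) : Finset (Zd d) :=
  (bdry d R).filter fun x => ∃ y ∈ boxD d R, Adj x y

/-- The oriented edge set `E_R = {(x,y) : x ∼ y, |x+y|_∞ < 2R}`. -/
def ER (d R : ℕ) : Finset (Zd d × Zd d) :=
  ((boxC d R) ×ˢ (boxC d R)).filter fun e =>
    Adj e.1 e.2 ∧ ∀ i, |e.1 i + e.2 i| < 2 * (R : ℤ)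

/-- The normal edges `E_R^{nor} = {(x,y) : x ∈ D_R, y ∈ ∂D_R, x ∼ y}`. -/
def Enor (d R : ℕ) : Finset (Zd d × Zd d) :=
  ((boxD d R) ×ˢ (bdry d R)).filter fun e => Adj e.1 e.2

/-- The tangential edges `E_R^{tan} = {(x,y) : x, y ∈ ∂D_R, x ∼ y}`. -/
def Etan (d R : ℕ) : Finset (Zd d × Zd d) :=
  ((bdry d R) ×ˢ (bdry d R)).filter fun e => Adj e.1 e.2

/-- Normalized `ℓ^r` norm `⦀u⦀_{r,A}` on a finite set. -/
def avNorm {V : Type*} (r : ℝ) (A : Finset V) (u : V → ℝ) : ℝ :=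
  ((∑ x ∈ A, |u x| ^ r) / (A.card : ℝ)) ^ (1 / r)

/-- Sup norm `⦀u⦀_{∞,A}` on a finite set. -/
def supNorm {V : Type*} (A : Finset V) (u : V → ℝ) : ℝ :=
  ⨆ x ∈ A, |u x|

/-- Normalized `ℓ^r` norm for an extended exponent `r ∈ [1,∞]`. -/
def avNormE {V : Type*} (r : ℝ≥0∞) (A : Finset V) (u : V → ℝ) : ℝ :=
  if r = ∞ then supNorm A u else avNorm r.toReal A u

/-- The exponent `2p/(p-1)`, with the convention that it equals `2` for `p = ∞`. -/
def dualExp (p : ℝ≥0∞) : ℝ :=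
  if p = ∞ then 2 else 2 * p.toReal / (p.toReal - 1)

/-- The exponent `2p/(p+1)`, with the convention that it equals `2` for `p = ∞`. -/
def coExp (p : ℝ≥0∞) : ℝ :=
  if p = ∞ then 2 else 2 * p.toReal / (p.toReal + 1)

/-- Euclidean norm on `ℝ^d`. -/
def vecNorm {d : ℕ} (v : Fin d → ℝ) : ℝ := Real.sqrt (∑ i, v i ^ 2)

/-- The translation `τ_a` acting on environments. -/
def shiftEnv {d : ℕ} (a : Zd d) (ω : Env d) : Env d := fun e => ω (e.1 + a, e.2)

/-- Stationarity of a measure on environments. -/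
def Stationary {d : ℕ} (P : Measure (Env d)) : Prop :=
  ∀ a : Zd d, MeasurePreserving (shiftEnv a) P P

/-- Ergodicity of a measure on environments w.r.t. the translations. -/
def ErgodicEnv {d : ℕ} (P : Measure (Env d)) : Prop :=
  ∀ A : Set (Env d), MeasurableSet A → (∀ a : Zd d, shiftEnv a ⁻¹' A = A) →
    P A = 0 ∨ P A = 1

/-- Stationary (`Stat_P`) random fields. -/
def StatP {d : ℕ} {E : Type*} [MeasurableSpace E] (P : Measure (Env d))
    (f : Env d → Zd d → E) : Prop :=
  Measurable (Function.uncurry f) ∧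
    ∀ᵐ ω ∂P, ∀ x : Zd d, f ω x = f (shiftEnv x ω) 0

/-- The horizontal derivative `D_i` on functions of the environment. -/
def Dop {d : ℕ} (i : Fin d) (ζ : Env d → ℝ) : Env d → ℝ :=
  fun ω => ζ (shiftEnv (unitVec i) ω) - ζ ω

/-- The horizontal derivative `D_i^*` on functions of the environment. -/
def DopStar {d : ℕ} (i : Fin d) (ζ : Env d → ℝ) : Env d → ℝ :=
  fun ω => ζ (shiftEnv (-(unitVec i)) ω) - ζ ω

/-- The reflection of `ℤ^d` flipping the `j`-th coordinate. -/
def reflPt {d : ℕ} (j : Fin d) (x : Zd d) : Zd d := fun k => if k = j then -x k else x k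

/-- The reflection `ρ_j` acting on environments. -/
def reflEnv {d : ℕ} (j : Fin d) (ω : Env d) : Env d :=
  fun e => ω (if e.2 = j then reflPt j e.1 - unitVec j else reflPt j e.1, e.2)

/-- The dual smoothing operator `S^*` built from `S` and the modifying operator `Z`. -/
def Sstar (d R : ℕ) (S Z : (Zd d → ℝ) →ₗ[ℝ] (Zd d → ℝ)) (h : Zd d → ℝ) (x : Zd d) : ℝ :=
  ∑ y ∈ tbdry d R, h y * (S (Z (fun z => if z = x then (1 : ℝ) else 0))) y


/-- Auxiliary: the signed power times the value gives the absolute power. -/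
lemma signPow_mul_self {r : ℝ} (hr : 0 < r) (a : ℝ) :
    (if a < 0 then -(|a| ^ (r - 1)) else |a| ^ (r - 1)) * a = |a| ^ r := by
  rcases lt_trichotomy a 0 with h | h | h
  · rw [if_pos h, abs_of_neg h]
    have e := Real.rpow_add_one (by simpa using (neg_pos.mpr h).ne' : (-a) ≠ 0) (r - 1)
    rw [show r - 1 + 1 = r from by ring] at e
    rw [e]; ring
  · subst h
    simp [Real.zero_rpow (ne_of_gt hr)]
  · rw [if_neg (not_lt.mpr h.le), abs_of_pos h]
    have e := Real.rpow_add_one (ne_of_gt h) (r - 1)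
    rw [show r - 1 + 1 = r from by ring] at e
    rw [e]

/-- Auxiliary: absolute value of the signed power. -/
lemma abs_signPow (r : ℝ) (a : ℝ) :
    |if a < 0 then -(|a| ^ (r - 1)) else |a| ^ (r - 1)| = |a| ^ (r - 1) := by
  split <;> simp [abs_of_nonneg (Real.rpow_nonneg (abs_nonneg a) _)]

/-- The exponents `coExp p` and `dualExp p` are conjugate. -/
lemma coExp_isConjExponent_dualExp {p : ℝ≥0∞} (hp : 1 < p) :
    Real.HolderConjugate (coExp p) (dualExp p) := by
  by_cases hptop : p = ∞
  · simp only [coExp, dualExp, if_pos hptop]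
    exact Real.holderConjugate_iff.mpr ⟨one_lt_two, by norm_num⟩
  · have ht : 1 < p.toReal := by
      have := ENNReal.toReal_strict_mono hptop hp
      simpa using this
    simp only [coExp, dualExp, if_neg hptop]
    rw [Real.holderConjugate_iff]
    constructor
    · rw [lt_div_iff₀ (by linarith)]
      linarith
    · rw [inv_div, inv_div]
      rw [← add_div, div_eq_one_iff_eq (by nlinarith)]
      ring

/-- Lemma `y27`: under `L^{2p/(p-1)}` bounds on `S` and `Z`,
`⦀S^* h⦀_{2p/(p+1), ∂̃D_R} ≤ c³ ⦀h⦀_{2p/(p+1), ∂̃D_R}`. -/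
theorem dual_smoothing_bound
    (d : ℕ) (hd : 2 ≤ d) (R : ℕ) (hne : (tbdry d R).Nonempty)
    (c : ℝ) (hc : 1 ≤ c) (p : ℝ≥0∞) (hp : 1 < p)
    (hcard : ((bdry d R).card : ℝ) ≤ c * ((tbdry d R).card : ℝ))
    (S Z : (Zd d → ℝ) →ₗ[ℝ] (Zd d → ℝ))
    (hZ0 : ∀ u : Zd d → ℝ, (∀ x ∈ tbdry d R, u x = 0) → Z u = 0)
    (hS : ∀ u : Zd d → ℝ,
      avNorm (dualExp p) (bdry d R) (S u) ≤ c * avNorm (dualExp p) (bdry d R) u)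
    (hZ : ∀ u : Zd d → ℝ,
      avNorm (dualExp p) (bdry d R) (Z u) ≤ c * avNorm (dualExp p) (tbdry d R) u) :
    ∀ h : Zd d → ℝ,
      avNorm (coExp p) (tbdry d R) (Sstar d R S Z h)
        ≤ c ^ 3 * avNorm (coExp p) (tbdry d R) h := by
  intro h
  have hconj := coExp_isConjExponent_dualExp hp
  set r : ℝ := coExp p with hrdef
  set q : ℝ := dualExp p with hqdef
  have hr1 : 1 < r := hconj.lt
  have hq1 : 1 < q := hconj.symm.lt
  have hr0 : 0 < r := hconj.pos
  have hq0 : 0 < q := hconj.symm.pos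
  have hinv : r⁻¹ + q⁻¹ = 1 := hconj.inv_add_inv_eq_one
  have hsum : q + r = r * q := by
    field_simp at hinv
    linarith
  have hrq : (r - 1) * q = r := by
    have : (r - 1) * q = r * q - q := by ring
    rw [this]
    linarith
  have hinv' : 1 / r + 1 / q = 1 := by
    rw [one_div, one_div]; exact hconj.inv_add_inv_eq_one
  have hBA : tbdry d R ⊆ bdry d R := Finset.filter_subset _ _
  have hnB : (0 : ℝ) < ((tbdry d R).card : ℝ) := by
    exact_mod_cast Finset.card_pos.mpr hne
  have hc0 : (0 : ℝ) < c := lt_of_lt_of_le one_pos hc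
  set F : Zd d → ℝ := Sstar d R S Z h with hFdef
  set g : Zd d → ℝ := fun x => if x ∈ tbdry d R then
      (if F x < 0 then -(|F x| ^ (r - 1)) else |F x| ^ (r - 1)) else 0 with hgdef
  set T : ℝ := ∑ x ∈ tbdry d R, |F x| ^ r with hTdef
  set H : ℝ := ∑ x ∈ tbdry d R, |h x| ^ r with hHdef
  have hT0 : 0 ≤ T := Finset.sum_nonneg fun x _ => Real.rpow_nonneg (abs_nonneg _) _
  have hH0 : 0 ≤ H := Finset.sum_nonneg fun x _ => Real.rpow_nonneg (abs_nonneg _) _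
  -- |g|^q = |F|^r on the reduced boundary
  have hgq : ∀ x ∈ tbdry d R, |g x| ^ q = |F x| ^ r := by
    intro x hx
    rw [hgdef]
    simp only [if_pos hx]
    rw [abs_signPow, ← Real.rpow_mul (abs_nonneg _), hrq]
  -- g x * F x = |F x|^r on the reduced boundary
  have hgF : ∀ x ∈ tbdry d R, g x * F x = |F x| ^ r := by
    intro x hx
    rw [hgdef]
    simp only [if_pos hx]
    exact signPow_mul_self hr0 (F x)
  -- decomposition of g as combination of indicators
  have hgsum : g = ∑ x ∈ tbdry d R, g x • (fun z => if z = x then (1 : ℝ) else 0) := by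
    funext z
    rw [Finset.sum_apply]
    simp only [Pi.smul_apply, smul_eq_mul, mul_ite, mul_one, mul_zero]
    rw [Finset.sum_ite_eq (tbdry d R) z g]
    by_cases hz : z ∈ tbdry d R
    · simp [hz, hgdef]
    · simp [hz, hgdef]
  have hSZg : S (Z g) = ∑ x ∈ tbdry d R,
      g x • S (Z (fun z => if z = x then (1 : ℝ) else 0)) := by
    conv_lhs => rw [hgsum]
    rw [map_sum, map_sum]
    simp only [LinearMap.map_smul]
  -- the key duality identity
  have hkey : T = ∑ y ∈ tbdry d R, h y * (S (Z g)) y := by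
    rw [hTdef]
    rw [← Finset.sum_congr rfl hgF]
    simp only [hFdef, Sstar, hSZg, Finset.sum_apply, Pi.smul_apply, smul_eq_mul,
      Finset.mul_sum]
    rw [Finset.sum_comm]
    exact Finset.sum_congr rfl fun y _ => Finset.sum_congr rfl fun x _ => by ring
  -- Hölder
  have hHolder : T ≤ H ^ (1 / r) * (∑ y ∈ tbdry d R, |(S (Z g)) y| ^ q) ^ (1 / q) := by
    rw [hkey]
    exact Real.inner_le_Lp_mul_Lq (tbdry d R) h (S (Z g)) hconj
  -- enlarge to the full boundary
  have hmono : (∑ y ∈ tbdry d R, |(S (Z g)) y| ^ q) ^ (1 / q)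
      ≤ (∑ y ∈ bdry d R, |(S (Z g)) y| ^ q) ^ (1 / q) := by
    apply Real.rpow_le_rpow
      (Finset.sum_nonneg fun _ _ => Real.rpow_nonneg (abs_nonneg _) _)
      (Finset.sum_le_sum_of_subset_of_nonneg hBA
        fun x _ _ => Real.rpow_nonneg (abs_nonneg _) _)
      (by positivity)
  have hnA : (0 : ℝ) < ((bdry d R).card : ℝ) := by
    exact_mod_cast Finset.card_pos.mpr (hne.mono hBA)
  -- operator bounds
  have hop : avNorm q (bdry d R) (S (Z g)) ≤ c ^ 2 * avNorm q (tbdry d R) g := by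
    calc avNorm q (bdry d R) (S (Z g)) ≤ c * avNorm q (bdry d R) (Z g) := hS (Z g)
      _ ≤ c * (c * avNorm q (tbdry d R) g) :=
          mul_le_mul_of_nonneg_left (hZ g) hc0.le
      _ = c ^ 2 * avNorm q (tbdry d R) g := by ring
  have hgnorm : avNorm q (tbdry d R) g = (T / ((tbdry d R).card : ℝ)) ^ (1 / q) := by
    rw [avNorm, hTdef]
    congr 2
    exact Finset.sum_congr rfl hgq
  -- translate the avNorm bound into a raw-sum bound
  have hraw : (∑ y ∈ bdry d R, |(S (Z g)) y| ^ q) ^ (1 / q)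
      ≤ ((bdry d R).card : ℝ) ^ (1 / q) * (c ^ 2 * (T / ((tbdry d R).card : ℝ)) ^ (1 / q)) := by
    have h1 : (∑ y ∈ bdry d R, |(S (Z g)) y| ^ q) ^ (1 / q)
        = ((bdry d R).card : ℝ) ^ (1 / q) * avNorm q (bdry d R) (S (Z g)) := by
      rw [avNorm, Real.div_rpow
        (Finset.sum_nonneg fun _ _ => Real.rpow_nonneg (abs_nonneg _) _) hnA.le]
      field_simp
    rw [hgnorm] at hop
    rw [h1]
    exact mul_le_mul_of_nonneg_left hop (Real.rpow_nonneg hnA.le _)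
  -- assemble: T ≤ H^{1/r} * n_A^{1/q} * c² * (T/n_B)^{1/q}
  have hmain : T ≤ H ^ (1 / r) * (((bdry d R).card : ℝ) ^ (1 / q)
      * (c ^ 2 * (T / ((tbdry d R).card : ℝ)) ^ (1 / q))) := by
    calc T ≤ H ^ (1 / r) * (∑ y ∈ tbdry d R, |(S (Z g)) y| ^ q) ^ (1 / q) := hHolder
      _ ≤ H ^ (1 / r) * (∑ y ∈ bdry d R, |(S (Z g)) y| ^ q) ^ (1 / q) :=
          mul_le_mul_of_nonneg_left hmono (Real.rpow_nonneg hH0 _)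
      _ ≤ _ := mul_le_mul_of_nonneg_left hraw (Real.rpow_nonneg hH0 _)
  -- the quotient of cardinalities is at most c, and c^{1/q} ≤ c
  have hcardq : (((bdry d R).card : ℝ) / ((tbdry d R).card : ℝ)) ^ (1 / q) ≤ c := by
    calc (((bdry d R).card : ℝ) / ((tbdry d R).card : ℝ)) ^ (1 / q)
        ≤ c ^ (1 / q) := Real.rpow_le_rpow (by positivity)
          ((div_le_iff₀ hnB).mpr hcard) (by positivity)
      _ ≤ c ^ (1 : ℝ) := Real.rpow_le_rpow_of_exponent_le hc
          (by rw [div_le_one hq0]; linarith)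
      _ = c := Real.rpow_one c
  -- final goal
  rw [show avNorm r (tbdry d R) F = (T / ((tbdry d R).card : ℝ)) ^ (1 / r) from by
      rw [avNorm, hTdef],
    show avNorm r (tbdry d R) h = (H / ((tbdry d R).card : ℝ)) ^ (1 / r) from by
      rw [avNorm, hHdef]]
  clear_value r q F g T H
  rcases eq_or_lt_of_le hT0 with hT | hT
  · rw [← hT]
    rw [zero_div, Real.zero_rpow (one_div_ne_zero (ne_of_gt hr0))]
    exact mul_nonneg (pow_nonneg hc0.le 3)
      (Real.rpow_nonneg (div_nonneg hH0 hnB.le) _)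
  · -- divide by T^{1/q} > 0
    have hTq : (0 : ℝ) < T ^ (1 / q) := Real.rpow_pos_of_pos hT _
    have hTsplit : T = T ^ (1 / r) * T ^ (1 / q) := by
      rw [← Real.rpow_add hT, hinv', Real.rpow_one]
    have hstep : T ^ (1 / r) ≤ H ^ (1 / r) * ((((bdry d R).card : ℝ)
        / ((tbdry d R).card : ℝ)) ^ (1 / q) * c ^ 2) := by
      apply le_of_mul_le_mul_right _ hTq
      calc T ^ (1 / r) * T ^ (1 / q) = T := hTsplit.symm
        _ ≤ H ^ (1 / r) * (((bdry d R).card : ℝ) ^ (1 / q)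
            * (c ^ 2 * (T / ((tbdry d R).card : ℝ)) ^ (1 / q))) := hmain
        _ = H ^ (1 / r) * ((((bdry d R).card : ℝ) / ((tbdry d R).card : ℝ)) ^ (1 / q)
            * c ^ 2) * T ^ (1 / q) := by
            rw [Real.div_rpow hT0 hnB.le, Real.div_rpow hnA.le hnB.le]
            ring
    have hfin : T ^ (1 / r) ≤ c ^ 3 * H ^ (1 / r) := by
      calc T ^ (1 / r) ≤ H ^ (1 / r) * ((((bdry d R).card : ℝ)
            / ((tbdry d R).card : ℝ)) ^ (1 / q) * c ^ 2) := hstep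
        _ ≤ H ^ (1 / r) * (c * c ^ 2) :=
            mul_le_mul_of_nonneg_left
              (mul_le_mul_of_nonneg_right hcardq (by positivity))
              (Real.rpow_nonneg hH0 _)
        _ = c ^ 3 * H ^ (1 / r) := by ring
    rw [Real.div_rpow hT0 hnB.le, Real.div_rpow hH0 hnB.le, ← mul_div_assoc]
    exact (div_le_div_iff_of_pos_right (Real.rpow_pos_of_pos hnB _)).mpr hfin


end
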